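/- In a regular multigrid with d directions, there exist r ∈ ℝ⁺ and k_r ∈ ℕ such that for any two distinct directions i ≠ j and any multigrid vertex z, there is a vertex z' of type (i,j) (i.e., the intersection of an i-line and a j-line) whose Euclidean distance to z is at most r and whose graph distance to z is at most k_r. One may take r = 2·max_{i≠j} |ζ_i^⊥·ζ_j|^{-1} and k_r = 2(d−1)⌈r/2⌉. -/

import Mathlib

open Set

noncomputable section

/-- Scalar product on `ℂ ≅ ℝ²`: `z·w := Re(z * conj w)`. -/
def dotp (z w : ℂ) : ℝ := (z * (starRingEnd ℂ) w).re

/-- Orthogonal vector: `ζ^⊥ := iζ`. -/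
def perp (ζ : ℂ) : ℂ := Complex.I * ζ

/-- `z` lies on the grid `G(ζᵢ, γᵢ)`. -/
def onGrid {d : ℕ} (ζ : Fin d → ℂ) (γ : Fin d → ℝ) (i : Fin d) (z : ℂ) : Prop :=
  ∃ m : ℤ, dotp z (ζ i) - γ i = m

/-- A multigrid vertex: an intersection point of two grid lines of distinct directions. -/
def IsVertex {d : ℕ} (ζ : Fin d → ℂ) (γ : Fin d → ℝ) (z : ℂ) : Prop :=
  ∃ i j : Fin d, i ≠ j ∧ onGrid ζ γ i z ∧ onGrid ζ γ j z

/-- The multigrid is regular: no point lies on grids of three distinct directions. -/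
def Regular {d : ℕ} (ζ : Fin d → ℂ) (γ : Fin d → ℝ) : Prop :=
  ∀ z : ℂ, Set.ncard {i : Fin d | onGrid ζ γ i z} ≤ 2

/-- `a` and `b` lie on a common line of the grid of direction `i`. -/
def SameLine {d : ℕ} (ζ : Fin d → ℂ) (γ : Fin d → ℝ) (i : Fin d) (a b : ℂ) : Prop :=
  onGrid ζ γ i a ∧ onGrid ζ γ i b ∧ ∃ t : ℝ, b - a = t • perp (ζ i)

/-- `c` lies strictly between `a` and `b` on the segment `[a,b]`. -/
def StrictBetween (a b c : ℂ) : Prop :=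
  ∃ t : ℝ, 0 < t ∧ t < 1 ∧ c = a + t • (b - a)

/-- The multigrid graph: vertices are the intersection points of grid lines, and two
vertices are adjacent when they are consecutive intersection points along a grid line. -/
def multigridGraph {d : ℕ} (ζ : Fin d → ℂ) (γ : Fin d → ℝ) : SimpleGraph ℂ where
  Adj a b := a ≠ b ∧ IsVertex ζ γ a ∧ IsVertex ζ γ b ∧
    ∃ i : Fin d, SameLine ζ γ i a b ∧
      ∀ c : ℂ, IsVertex ζ γ c → ¬ StrictBetween a b c
  symm := ⟨by
    rintro a b ⟨hab, ha, hb, i, ⟨hga, hgb, t, ht⟩, hno⟩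
    refine ⟨hab.symm, hb, ha, i, ⟨hgb, hga, -t, by rw [neg_smul, ← ht]; ring⟩, ?_⟩
    rintro c hc ⟨s, hs0, hs1, hcs⟩
    exact hno c hc ⟨1 - s, by linarith, by linarith, by rw [hcs]; module⟩⟩
  loopless := ⟨by rintro a ⟨h, _⟩; exact h rfl⟩

/-! ### Auxiliary lemmas -/

lemma dotp_add_smul (z w v : ℂ) (t : ℝ) :
    dotp (z + t • w) v = dotp z v + t * dotp w v := by
  simp [dotp, add_mul, Complex.real_smul, Complex.add_re, Complex.ofReal_mul, Complex.mul_re]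
  ring

lemma dotp_perp_self (ζ : ℂ) : dotp (perp ζ) ζ = 0 := by
  simp [dotp, perp, mul_assoc, Complex.mul_conj]

lemma abs_dotp_le (z w : ℂ) : |dotp z w| ≤ ‖z‖ * ‖w‖ := by
  calc |dotp z w| ≤ ‖z * (starRingEnd ℂ) w‖ := Complex.abs_re_le_norm _
  _ = ‖z‖ * ‖w‖ := by simp

lemma dotp_perp_ne_zero {ζk ζj : ℂ} (hj : ‖ζj‖ = 1)
    (hnp : ∀ t : ℝ, ζk ≠ t • ζj) : dotp (perp ζj) ζk ≠ 0 := by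
  intro h
  -- dotp (I ζj) ζk = Re (I ζj conj ζk) = -Im (ζj conj ζk)
  have him : (ζj * (starRingEnd ℂ) ζk).im = 0 := by
    have := h
    simp [dotp, perp, Complex.mul_re, Complex.mul_im, Complex.I_re, Complex.I_im] at this
    simp [Complex.mul_im]
    linarith [this]
  -- so w := ζk * conj ζj is real;  ζk = w.re • ζj
  set w := ζj * (starRingEnd ℂ) ζk with hw
  have hwre : w = (w.re : ℂ) := Complex.ext (by simp) (by simpa using him)
  have hjj : ζj * (starRingEnd ℂ) ζj = 1 := by
    rw [Complex.mul_conj]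
    norm_cast
    rw [← Complex.sq_norm, hj]; norm_num
  have : ζk = (w.re : ℝ) • ζj := by
    have h1 : (starRingEnd ℂ) w = (starRingEnd ℂ) ζj * ζk := by
      simp [hw, mul_comm]
    have h2 : (starRingEnd ℂ) w = (w.re : ℂ) := by rw [hwre]; simp
    have : ζj * ((starRingEnd ℂ) ζj * ζk) = ζj * (w.re : ℂ) := by rw [← h1, h2]
    rw [← mul_assoc, hjj, one_mul] at this
    rw [this, Complex.real_smul, mul_comm]
  exact hnp w.re this

def Tset {d : ℕ} (ζ : Fin d → ℂ) (γ : Fin d → ℝ) (a b : ℂ) : Set ℂ :=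
  {c | IsVertex ζ γ c ∧ (StrictBetween a b c ∨ c = b)}

lemma Tset_param {a b c : ℂ} (h : StrictBetween a b c ∨ c = b) :
    ∃ s : ℝ, 0 < s ∧ s ≤ 1 ∧ c = a + s • (b - a) := by
  rcases h with ⟨t, h0, h1, he⟩ | rfl
  · exact ⟨t, h0, le_of_lt h1, he⟩
  · exact ⟨1, one_pos, le_refl 1, by simp⟩

lemma param_unique {a b : ℂ} (hab : a ≠ b) {s s' : ℝ}
    (h : a + s • (b - a) = a + s' • (b - a)) : s = s' := by
  have h2 : (s - s') • (b - a) = 0 := by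
    rw [sub_smul]; rw [add_right_inj] at h; rw [h]; ring
  rcases smul_eq_zero.1 h2 with h3 | h3
  · linarith [sub_eq_zero.1 h3]
  · exact absurd (sub_eq_zero.1 h3) (fun he => hab he.symm)

/-- Generic cardinality bound via an injection into an integer interval. -/

lemma card_aux {S : Set ℂ} (g : ℂ → ℤ) (hginj : Set.InjOn g S) (M : ℤ) (n : ℕ)
    (hmem : ∀ c ∈ S, g c ∈ Finset.Ioc M (M + (n : ℤ))) : S.Finite ∧ S.ncard ≤ n := by
  have hfin : S.Finite := by
    refine Set.Finite.of_finite_image ?_ hginj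
    exact Set.Finite.subset (Finset.Ioc M (M + (n:ℤ))).finite_toSet
      (by rintro x ⟨c, hc, rfl⟩; exact hmem c hc)
  refine ⟨hfin, ?_⟩
  have := Set.ncard_le_ncard_of_injOn (t := ((Finset.Ioc M (M+(n:ℤ)) : Finset ℤ) : Set ℤ)) g
    (fun c hc => by simpa using hmem c hc) hginj (Finset.Ioc M (M + (n:ℤ))).finite_toSet
  rwa [Set.ncard_coe_finset, Int.card_Ioc, add_sub_cancel_left, Int.toNat_natCast] at this

lemma myBiUnion {ι α : Type*} [DecidableEq ι] (s : Finset ι) (f : ι → Set α) (n : ℕ) :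
  (∀ i ∈ s, (f i).ncard ≤ n) → (⋃ i ∈ s, f i).ncard ≤ s.card * n := by
  induction s using Finset.induction with
  | empty => simp
  | @insert a s' hx ih =>
    intro hn
    rw [Finset.set_biUnion_insert]
    calc (f a ∪ ⋃ i ∈ s', f i).ncard ≤ (f a).ncard + (⋃ i ∈ s', f i).ncard := Set.ncard_union_le _ _
    _ ≤ n + s'.card * n := add_le_add (hn a (Finset.mem_insert_self a s'))
        (ih (fun i hi => hn i (Finset.mem_insert_of_mem hi)))
    _ = (insert a s').card * n := by rw [Finset.card_insert_of_notMem hx]; ring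

lemma Tset_card {d : ℕ} (ζ : Fin d → ℂ) (γ : Fin d → ℝ)
    (hunit : ∀ j, ‖ζ j‖ = 1)
    (hnonpar : ∀ j k : Fin d, j ≠ k → ∀ t : ℝ, ζ k ≠ t • ζ j)
    (k : Fin d) {a b : ℂ} (hab : a ≠ b) (t : ℝ) (ht : b - a = t • perp (ζ k))
    (R : ℝ) (hR : ‖b - a‖ ≤ R) :
    (Tset ζ γ a b).Finite ∧ (Tset ζ γ a b).ncard ≤ (d - 1) * ⌈R⌉₊ := by
  classical
  set S : Fin d → Set ℂ := fun j => {c | c ∈ Tset ζ γ a b ∧ onGrid ζ γ j c} with hS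
  have hRnn : 0 ≤ R := le_trans (norm_nonneg _) hR
  -- single direction bound
  have key : ∀ j, j ≠ k → (S j).Finite ∧ (S j).ncard ≤ ⌈R⌉₊ := by
    intro j hjk
    have hcjk : dotp (perp (ζ k)) (ζ j) ≠ 0 := dotp_perp_ne_zero (hunit k) (hnonpar k j (fun h => hjk h.symm) )
    have htne : t ≠ 0 := by
      intro h0
      apply hab
      have hz : b - a = 0 := by rw [ht, h0, zero_smul]
      exact (sub_eq_zero.1 hz).symm
    set β : ℝ := dotp (b - a) (ζ j) with hβ
    have hβval : β = t * dotp (perp (ζ k)) (ζ j) := by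
      rw [hβ, ht]
      have h := dotp_add_smul 0 (perp (ζ k)) (ζ j) t
      simpa [dotp] using h
    have hβne : β ≠ 0 := by rw [hβval]; exact mul_ne_zero htne hcjk
    have hβle : |β| ≤ R := by
      calc |β| ≤ ‖b - a‖ * ‖ζ j‖ := abs_dotp_le _ _
      _ = ‖b - a‖ := by rw [hunit j, mul_one]
      _ ≤ R := hR
    set x : ℝ := dotp a (ζ j) - γ j with hx
    -- the parameter and integer of each point of S j
    have hparam : ∀ c ∈ S j, ∃ s : ℝ, 0 < s ∧ s ≤ 1 ∧ c = a + s • (b - a) ∧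
        (dotp c (ζ j) - γ j) = x + s * β := by
      intro c hc
      obtain ⟨s, hs0, hs1, hcs⟩ := Tset_param hc.1.2
      refine ⟨s, hs0, hs1, hcs, ?_⟩
      rw [hcs, dotp_add_smul]; rw [hx, hβ]; ring
    have hint : ∀ c ∈ S j, ((⌊dotp c (ζ j) - γ j⌋ : ℝ)) = dotp c (ζ j) - γ j := by
      intro c hc
      obtain ⟨m, hm⟩ := hc.2
      rw [hm]; simp
    set g : ℂ → ℤ := fun c => ⌊dotp c (ζ j) - γ j⌋ with hg
    have hginj : Set.InjOn g (S j) := by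
      intro c hc c' hc' hgc
      obtain ⟨s, hs0, hs1, hcs, hval⟩ := hparam c hc
      obtain ⟨s', hs0', hs1', hcs', hval'⟩ := hparam c' hc'
      have : x + s * β = x + s' * β := by
        rw [← hval, ← hval', ← hint c hc, ← hint c' hc']
        exact_mod_cast hgc
      have hss : s = s' := by
        have := add_left_cancel this
        exact mul_right_cancel₀ hβne this
      rw [hcs, hcs', hss]
    -- membership in an integer interval
    rcases lt_or_gt_of_ne hβne with hneg | hpos
    · -- β < 0 : m ∈ [x+β, x)
      refine card_aux g hginj (⌈x⌉ - 1 - (⌈R⌉₊ : ℤ)) ⌈R⌉₊ ?_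
      intro c hc
      obtain ⟨s, hs0, hs1, hcs, hval⟩ := hparam c hc
      have hgval : (g c : ℝ) = x + s * β := by rw [hg, hint c hc, hval]
      simp only [Finset.mem_Ioc]
      constructor
      · have h1 : x - R ≤ x + s * β := by nlinarith [abs_le.1 hβle]
        have h2 : ((⌈x⌉ - 1 - (⌈R⌉₊:ℤ) : ℤ) : ℝ) < x - R := by
          push_cast
          have := Int.ceil_lt_add_one x
          have := Nat.le_ceil R
          linarith
        have : ((⌈x⌉ - 1 - (⌈R⌉₊:ℤ) : ℤ) : ℝ) < (g c : ℝ) := by rw [hgval]; linarith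
        exact_mod_cast this
      · have h1 : x + s * β < x := by nlinarith
        have : (g c : ℝ) < x := by rw [hgval]; exact h1
        have h2 : g c < ⌈x⌉ := Int.lt_ceil.2 this
        omega
    · -- β > 0 : m ∈ (x, x+β]
      refine card_aux g hginj ⌊x⌋ ⌈R⌉₊ ?_
      intro c hc
      obtain ⟨s, hs0, hs1, hcs, hval⟩ := hparam c hc
      have hgval : (g c : ℝ) = x + s * β := by rw [hg, hint c hc, hval]
      simp only [Finset.mem_Ioc]
      constructor
      · have h1 : x < x + s * β := by nlinarith
        exact Int.floor_lt.2 (by rw [hgval]; exact h1)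
      · have h1 : x + s * β ≤ x + R := by nlinarith [abs_le.1 hβle]
        have h2 : ((⌊x⌋ + (⌈R⌉₊:ℤ) : ℤ) : ℝ) + 1 > x + R := by
          push_cast
          have := Int.sub_one_lt_floor x
          have := Nat.le_ceil R
          linarith
        have : (g c : ℝ) < ((⌊x⌋ + (⌈R⌉₊:ℤ) : ℤ) : ℝ) + 1 := by rw [hgval]; linarith
        have := by exact_mod_cast this
        omega
  -- covering
  have hcover : Tset ζ γ a b ⊆ ⋃ j ∈ Finset.univ.erase k, S j := by
    intro c hc
    obtain ⟨⟨p, q, hpq, hp, hq⟩, hstrict⟩ := hc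
    have : ∃ j, j ≠ k ∧ onGrid ζ γ j c := by
      by_cases hpk : p = k
      · exact ⟨q, by rw [← hpk]; exact fun h => hpq h.symm, hq⟩
      · exact ⟨p, hpk, hp⟩
    obtain ⟨j, hjk, hjc⟩ := this
    exact Set.mem_biUnion (Finset.mem_erase.2 ⟨hjk, Finset.mem_univ j⟩)
      ⟨⟨⟨p, q, hpq, hp, hq⟩, hstrict⟩, hjc⟩
  have hfinU : (⋃ j ∈ Finset.univ.erase k, S j).Finite :=
    Set.Finite.biUnion (Finset.univ.erase k).finite_toSet
      (fun j hj => (key j (Finset.mem_erase.1 hj).1).1)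
  have hfin : (Tset ζ γ a b).Finite := hfinU.subset hcover
  refine ⟨hfin, ?_⟩
  calc (Tset ζ γ a b).ncard ≤ (⋃ j ∈ Finset.univ.erase k, S j).ncard :=
        Set.ncard_le_ncard hcover hfinU
  _ ≤ (Finset.univ.erase k).card * ⌈R⌉₊ :=
        myBiUnion _ _ _ (fun j hj => (key j (Finset.mem_erase.1 hj).1).2)
  _ = (d - 1) * ⌈R⌉₊ := by
        rw [Finset.card_erase_of_mem (Finset.mem_univ k), Finset.card_univ, Fintype.card_fin]

lemma abs_smul_complex (s : ℝ) (v : ℂ) :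
    ‖s • v‖ = |s| * ‖v‖ := by
  rw [norm_smul, Real.norm_eq_abs]

lemma onGrid_translate {d : ℕ} {ζ : Fin d → ℂ} {γ : Fin d → ℝ} {k : Fin d} {a c : ℂ}
    (ha : onGrid ζ γ k a) {u : ℝ} (hc : c = a + u • perp (ζ k)) : onGrid ζ γ k c := by
  obtain ⟨m, hm⟩ := ha
  exact ⟨m, by rw [hc, dotp_add_smul, dotp_perp_self, mul_zero, add_zero]; exact hm⟩

lemma walk_along {d : ℕ} (ζ : Fin d → ℂ) (γ : Fin d → ℝ) (k : Fin d) (b : ℂ)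
    (hbv : IsVertex ζ γ b) (hgb : onGrid ζ γ k b) :
    ∀ n : ℕ, ∀ a : ℂ, IsVertex ζ γ a → onGrid ζ γ k a →
      (∃ t : ℝ, b - a = t • perp (ζ k)) →
      (Tset ζ γ a b).Finite → (Tset ζ γ a b).ncard ≤ n →
      ∃ w : (multigridGraph ζ γ).Walk a b, w.length ≤ (Tset ζ γ a b).ncard := by
  intro n
  induction n with
  | zero =>
    intro a hav hga hline hfin hn
    by_cases hab : a = b
    · subst hab; exact ⟨SimpleGraph.Walk.nil, by simp⟩
    · exfalso
      have hbT : b ∈ Tset ζ γ a b := ⟨hbv, Or.inr rfl⟩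
      have := (Set.ncard_pos hfin).2 ⟨b, hbT⟩
      omega
  | succ n ih =>
    intro a hav hga hline hfin hn
    by_cases hab : a = b
    · subst hab; exact ⟨SimpleGraph.Walk.nil, by simp⟩
    obtain ⟨t, ht⟩ := hline
    have hbT : b ∈ Tset ζ γ a b := ⟨hbv, Or.inr rfl⟩
    have hpos : 1 ≤ (Tset ζ γ a b).ncard := (Set.ncard_pos hfin).2 ⟨b, hbT⟩
    have hbane : b - a ≠ 0 := sub_ne_zero.2 (Ne.symm hab)
    have habspos : 0 < ‖b - a‖ := by
      exact norm_pos_iff.2 hbane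
    obtain ⟨c₀, hc₀T, hmin⟩ :=
      Set.exists_min_image (Tset ζ γ a b) (fun c => ‖c - a‖) hfin ⟨b, hbT⟩
    obtain ⟨s₀, hs₀0, hs₀1, hc₀⟩ := Tset_param hc₀T.2
    have hc₀a : c₀ - a = s₀ • (b - a) := by rw [hc₀]; ring
    -- no vertex strictly between a and c₀
    have hno : ∀ e : ℂ, IsVertex ζ γ e → ¬ StrictBetween a c₀ e := by
      rintro e hev ⟨u, hu0, hu1, he⟩
      have he' : e = a + (u * s₀) • (b - a) := by
        rw [he, hc₀a, smul_smul]
      have heT : e ∈ Tset ζ γ a b := by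
        refine ⟨hev, Or.inl ⟨u * s₀, mul_pos hu0 hs₀0, ?_, he'⟩⟩
        nlinarith
      have h1 := hmin e heT
      have h2 : ‖e - a‖ = (u * s₀) * ‖b - a‖ := by
        rw [he']
        have : a + (u * s₀) • (b - a) - a = (u * s₀) • (b - a) := by ring
        rw [this, abs_smul_complex, abs_of_pos (mul_pos hu0 hs₀0)]
      have h3 : ‖c₀ - a‖ = s₀ * ‖b - a‖ := by
        rw [hc₀a, abs_smul_complex, abs_of_pos hs₀0]
      simp only [h2, h3] at h1
      nlinarith [habspos, hs₀0, hu1, mul_pos hs₀0 habspos]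
    by_cases hc₀b : c₀ = b
    · -- adjacent to b directly
      have hadj : (multigridGraph ζ γ).Adj a b :=
        ⟨hab, hav, hbv, k, ⟨hga, hgb, t, ht⟩, by rw [← hc₀b]; exact hno⟩
      exact ⟨SimpleGraph.Walk.cons hadj SimpleGraph.Walk.nil, by simpa using hpos⟩
    · have hs₀1' : s₀ < 1 := lt_of_le_of_ne hs₀1 (fun h => hc₀b (by rw [hc₀, h, one_smul]; ring))
      have hac₀ : a ≠ c₀ := by
        intro h
        have : s₀ • (b - a) = 0 := by rw [← hc₀a, ← h]; ring
        rcases smul_eq_zero.1 this with h' | h'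
        · linarith
        · exact hbane h'
      have hgc₀ : onGrid ζ γ k c₀ :=
        onGrid_translate hga (by rw [hc₀, ht, smul_smul])
      have hc₀v : IsVertex ζ γ c₀ := hc₀T.1
      have hadj : (multigridGraph ζ γ).Adj a c₀ :=
        ⟨hac₀, hav, hc₀v, k, ⟨hga, hgc₀, s₀ * t, by rw [hc₀a, ht, smul_smul]⟩, hno⟩
      have hbc₀ : b - c₀ = ((1 - s₀) * t) • perp (ζ k) := by
        rw [← smul_smul, ← ht, hc₀]; module
      have hbc₀' : b - c₀ = (1 - s₀) • (b - a) := by rw [hc₀]; module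
      -- subset relation
      have hsub : Tset ζ γ c₀ b ⊆ Tset ζ γ a b \ {c₀} := by
        rintro e ⟨hev, he2⟩
        rcases he2 with ⟨u, hu0, hu1, he⟩ | rfl
        · have he' : e = a + (s₀ + u * (1 - s₀)) • (b - a) := by
            rw [he, hbc₀', hc₀]; module
          have hv0 : 0 < s₀ + u * (1 - s₀) := by nlinarith
          have hv1 : s₀ + u * (1 - s₀) < 1 := by nlinarith
          refine ⟨⟨hev, Or.inl ⟨_, hv0, hv1, he'⟩⟩, ?_⟩
          simp only [Set.mem_singleton_iff]
          intro hec₀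
          have : s₀ + u * (1 - s₀) = s₀ := param_unique hab (by rw [← he', ← hc₀, hec₀])
          nlinarith
        · exact ⟨hbT, by simpa using fun h => hc₀b h.symm⟩
      have hfin' : (Tset ζ γ c₀ b).Finite :=
        hfin.subset (hsub.trans Set.diff_subset)
      have hcard : (Tset ζ γ c₀ b).ncard ≤ (Tset ζ γ a b).ncard - 1 := by
        calc (Tset ζ γ c₀ b).ncard ≤ (Tset ζ γ a b \ {c₀}).ncard :=
              Set.ncard_le_ncard hsub hfin.diff
        _ = (Tset ζ γ a b).ncard - 1 := Set.ncard_diff_singleton_of_mem hc₀T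
      obtain ⟨w', hw'⟩ := ih c₀ hc₀v hgc₀ ⟨(1 - s₀) * t, hbc₀⟩ hfin' (by omega)
      refine ⟨SimpleGraph.Walk.cons hadj w', ?_⟩
      rw [SimpleGraph.Walk.length_cons]
      omega

lemma leg {d : ℕ} (ζ : Fin d → ℂ) (γ : Fin d → ℝ)
    (hunit : ∀ j, ‖ζ j‖ = 1)
    (hnonpar : ∀ j k : Fin d, j ≠ k → ∀ t : ℝ, ζ k ≠ t • ζ j)
    {k m : Fin d} (hkm : k ≠ m) {p : ℂ} (hpv : IsVertex ζ γ p)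
    (hpk : onGrid ζ γ k p) {ρ : ℝ} (hs : |dotp (perp (ζ k)) (ζ m)|⁻¹ ≤ ρ) :
    ∃ q : ℂ, onGrid ζ γ k q ∧ onGrid ζ γ m q ∧ IsVertex ζ γ q ∧
      ‖q - p‖ ≤ ρ / 2 ∧
      ∃ w : (multigridGraph ζ γ).Walk p q, w.length ≤ (d - 1) * ⌈ρ⌉₊ := by
  have hc : dotp (perp (ζ k)) (ζ m) ≠ 0 :=
    dotp_perp_ne_zero (hunit k) (hnonpar k m hkm)
  set c : ℝ := dotp (perp (ζ k)) (ζ m) with hcdef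
  have hcpos : 0 < |c| := abs_pos.2 hc
  have hρpos : 0 < ρ := lt_of_lt_of_le (inv_pos.2 hcpos) hs
  set x : ℝ := dotp p (ζ m) - γ m with hxdef
  set u : ℝ := ((round x : ℝ) - x) / c with hudef
  set q : ℂ := p + u • perp (ζ k) with hqdef
  have hgkq : onGrid ζ γ k q := onGrid_translate hpk rfl
  have hgmq : onGrid ζ γ m q := by
    refine ⟨round x, ?_⟩
    rw [hqdef, dotp_add_smul]
    have huc : u * c = (round x : ℝ) - x := by
      rw [hudef]; field_simp
    rw [← hcdef] at *
    have : dotp p (ζ m) + u * c - γ m = x + ((round x : ℝ) - x) := by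
      rw [huc, hxdef]; ring
    rw [this]; ring
  have hqv : IsVertex ζ γ q := ⟨k, m, hkm, hgkq, hgmq⟩
  have habs : ‖q - p‖ ≤ ρ / 2 := by
    have h1 : q - p = u • perp (ζ k) := by rw [hqdef]; ring
    rw [h1, abs_smul_complex, perp, norm_mul, Complex.norm_I, one_mul, hunit k, mul_one]
    have h2 : |u| = |(round x : ℝ) - x| * |c|⁻¹ := by
      rw [hudef, abs_div, div_eq_mul_inv]
    have h3 : |(round x : ℝ) - x| ≤ 1 / 2 := by
      rw [abs_sub_comm]; exact abs_sub_round x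
    rw [h2]
    calc |(round x : ℝ) - x| * |c|⁻¹ ≤ (1/2) * ρ := by
          apply mul_le_mul h3 hs (le_of_lt (inv_pos.2 hcpos)) (by norm_num)
    _ = ρ / 2 := by ring
  refine ⟨q, hgkq, hgmq, hqv, habs, ?_⟩
  by_cases hpq : p = q
  · exact ⟨(SimpleGraph.Walk.nil' p).copy rfl hpq, by rw [SimpleGraph.Walk.length_copy]; simp⟩
  · obtain ⟨hfinT, hcardT⟩ := Tset_card ζ γ hunit hnonpar k hpq u
      (by rw [hqdef]; ring) ρ (le_trans habs (by linarith))
    obtain ⟨w, hw⟩ := walk_along ζ γ k q hqv hgkq ((Tset ζ γ p q).ncard) p hpv hpk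
      ⟨u, by rw [hqdef]; ring⟩ hfinT le_rfl
    exact ⟨w, le_trans hw hcardT⟩

/-- Relative density of crossings of a given type: in a regular multigrid with `d ≥ 2`
pairwise non-parallel unit directions, there are `r ∈ ℝ⁺` and `k_r ∈ ℕ` such that for any
distinct directions `i ≠ j` and any multigrid vertex `z`, some vertex `z'` of type `(i,j)`
is at Euclidean distance at most `r` and graph distance at most `k_r` from `z`.  One may
take `r = 2·max_{i≠j} |ζᵢ^⊥·ζⱼ|⁻¹` and `k_r = 2(d−1)⌈r/2⌉`. -/
theorem multigrid_bounded_distance {d : ℕ} (ζ : Fin d → ℂ) (γ : Fin d → ℝ)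
    (hd : 2 ≤ d)
    (hunit : ∀ j, ‖ζ j‖ = 1)
    (hnonpar : ∀ j k : Fin d, j ≠ k → ∀ t : ℝ, ζ k ≠ t • ζ j)
    (hreg : Regular ζ γ) :
    ∃ (r : ℝ) (k_r : ℕ),
      r = 2 * (⨆ p : {p : Fin d × Fin d // p.1 ≠ p.2}, |dotp (perp (ζ p.1.1)) (ζ p.1.2)|⁻¹) ∧
      k_r = 2 * (d - 1) * ⌈r / 2⌉₊ ∧
      ∀ i j : Fin d, i ≠ j → ∀ z : ℂ, IsVertex ζ γ z →
        ∃ z' : ℂ, onGrid ζ γ i z' ∧ onGrid ζ γ j z' ∧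
          dist z z' ≤ r ∧ (multigridGraph ζ γ).dist z z' ≤ k_r := by
  set ρ : ℝ := ⨆ p : {p : Fin d × Fin d // p.1 ≠ p.2}, |dotp (perp (ζ p.1.1)) (ζ p.1.2)|⁻¹
    with hρdef
  refine ⟨2 * ρ, 2 * (d - 1) * ⌈(2 * ρ) / 2⌉₊, rfl, rfl, ?_⟩
  have hsup : ∀ (i j : Fin d), i ≠ j → |dotp (perp (ζ i)) (ζ j)|⁻¹ ≤ ρ := by
    intro i j hij
    rw [hρdef]
    exact le_ciSup (f := fun p : {p : Fin d × Fin d // p.1 ≠ p.2} =>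
        |dotp (perp (ζ p.1.1)) (ζ p.1.2)|⁻¹)
      (Set.Finite.bddAbove (Set.finite_range _)) ⟨(i, j), hij⟩
  have hρpos : 0 < ρ := by
    have h01 : (⟨0, by omega⟩ : Fin d) ≠ (⟨1, by omega⟩ : Fin d) := by
      intro h; simpa using congrArg Fin.val h
    have hc : dotp (perp (ζ ⟨0, by omega⟩)) (ζ ⟨1, by omega⟩) ≠ 0 :=
      dotp_perp_ne_zero (hunit _) (hnonpar _ _ h01)
    exact lt_of_lt_of_le (inv_pos.2 (abs_pos.2 hc)) (hsup _ _ h01)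
  have hceil : (2 * ρ) / 2 = ρ := by ring
  rw [hceil]
  intro i j hij z hz
  by_cases hzi : onGrid ζ γ i z
  · obtain ⟨q, hq1, hq2, hqv, habs, w, hw⟩ :=
      leg ζ γ hunit hnonpar hij hz hzi (hsup i j hij)
    refine ⟨q, hq1, hq2, ?_, ?_⟩
    · rw [Complex.dist_eq]
      calc ‖z - q‖ = ‖q - z‖ := by rw [norm_sub_rev]
      _ ≤ ρ / 2 := habs
      _ ≤ 2 * ρ := by linarith
    · calc (multigridGraph ζ γ).dist z q ≤ w.length := SimpleGraph.dist_le w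
      _ ≤ (d - 1) * ⌈ρ⌉₊ := hw
      _ ≤ 2 * (d - 1) * ⌈ρ⌉₊ := Nat.mul_le_mul_right _ (by omega)
  · obtain ⟨i₀, j₀, hne₀, hg₀, hg₁⟩ := hz
    have hi₀i : i₀ ≠ i := by rintro rfl; exact hzi hg₀
    obtain ⟨q₁, hq₁1, hq₁2, hq₁v, habs₁, w₁, hw₁⟩ :=
      leg ζ γ hunit hnonpar hi₀i ⟨i₀, j₀, hne₀, hg₀, hg₁⟩ hg₀ (hsup i₀ i hi₀i)
    obtain ⟨q₂, hq₂1, hq₂2, hq₂v, habs₂, w₂, hw₂⟩ :=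
      leg ζ γ hunit hnonpar hij hq₁v hq₁2 (hsup i j hij)
    refine ⟨q₂, hq₂1, hq₂2, ?_, ?_⟩
    · calc dist z q₂ ≤ dist z q₁ + dist q₁ q₂ := dist_triangle _ _ _
      _ ≤ ρ / 2 + ρ / 2 := by
          apply add_le_add
          · rw [Complex.dist_eq, norm_sub_rev]; exact habs₁
          · rw [Complex.dist_eq, norm_sub_rev]; exact habs₂
      _ ≤ 2 * ρ := by linarith
    · calc (multigridGraph ζ γ).dist z q₂ ≤ (w₁.append w₂).length :=
            SimpleGraph.dist_le _
      _ = w₁.length + w₂.length := SimpleGraph.Walk.length_append _ _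
      _ ≤ (d - 1) * ⌈ρ⌉₊ + (d - 1) * ⌈ρ⌉₊ := add_le_add hw₁ hw₂
      _ = 2 * (d - 1) * ⌈ρ⌉₊ := by ring
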